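/- The map θ ↦ exp(i t B · J_{n_θ}) (matrix exponential) is differentiable in θ, and its derivative V at θ satisfies i · V · exp(−i t B · J_{n_θ}) = 2 sin(Bt/2) · J_{n₁}. (This is the operator 𝓗_θ = i (∂_θ U†) U for the unitary encoding U = exp(−i t B J_{n_θ}).) -/

import Mathlib

open scoped BigOperators

open NormedSpace

open NormedSpace

attribute [local instance] Matrix.linftyOpNormedRing Matrix.linftyOpNormedAlgebra

namespace Su2Aux

variable {N : ℕ}

lemma hasDerivAt_expP (A : Matrix (Fin N) (Fin N) ℂ) (s : ℝ) :
    HasDerivAt (fun u : ℝ => exp (u • A)) (exp (s • A) * A) s := by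
  have h := hasDerivAt_exp_smul_const (𝕂 := ℝ) A s
  exact h

lemma exp_mul_exp_neg (A : Matrix (Fin N) (Fin N) ℂ) :
    exp A * exp (-A) = 1 := by
  rw [← Matrix.exp_add_of_commute _ _ ((Commute.refl A).neg_right)]
  simp

lemma exp_neg_mul_exp (A : Matrix (Fin N) (Fin N) ℂ) :
    exp (-A) * exp A = 1 := by
  rw [← Matrix.exp_add_of_commute _ _ ((Commute.refl A).neg_left)]
  simp

lemma conj_aux (X Y Z : Matrix (Fin N) (Fin N) ℂ)
    (h1 : X * Y - Y * X = Complex.I • Z)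
    (h2 : X * Z - Z * X = -(Complex.I • Y)) (s : ℝ) :
    exp (s • (Complex.I • X)) * Y * exp (-(s • (Complex.I • X)))
      = (Real.cos s : ℂ) • Y - (Real.sin s : ℂ) • Z := by
  set A : Matrix (Fin N) (Fin N) ℂ := Complex.I • X with hA
  set C : ℝ → Matrix (Fin N) (Fin N) ℂ :=
    fun u => ((Real.cos u : ℝ) : ℂ) • Y - ((Real.sin u : ℝ) : ℂ) • Z with hC
  have e1 : X * Y = Complex.I • Z + Y * X := eq_add_of_sub_eq h1
  have e2 : X * Z = -(Complex.I • Y) + Z * X := eq_add_of_sub_eq h2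
  have key : ∀ u : ℝ, A * C u - C u * A
      = ((-Real.sin u : ℝ) : ℂ) • Y - ((Real.cos u : ℝ) : ℂ) • Z := by
    intro u
    simp only [hC, hA, smul_mul_assoc, mul_smul_comm, mul_sub, sub_mul, e1, e2,
      smul_add, smul_sub, smul_smul, smul_neg]
    match_scalars <;> simp [Complex.I_mul_I] <;> ring
  have hg : ∀ u : ℝ, HasDerivAt (fun v : ℝ => exp (-(v • A)) * C v * exp (v • A)) 0 u := by
    intro u
    have hQ : HasDerivAt (fun v : ℝ => exp (-(v • A))) (-(exp (-(u • A)) * A)) u := by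
      have h := hasDerivAt_expP (-A) u
      simp only [smul_neg, mul_neg] at h
      exact h
    have hP := hasDerivAt_expP A u
    have hc : HasDerivAt (fun v : ℝ => ((Real.cos v : ℝ) : ℂ)) ((-Real.sin u : ℝ) : ℂ) u :=
      (Real.hasDerivAt_cos u).ofReal_comp
    have hs : HasDerivAt (fun v : ℝ => ((Real.sin v : ℝ) : ℂ)) ((Real.cos u : ℝ) : ℂ) u :=
      (Real.hasDerivAt_sin u).ofReal_comp
    have hCd : HasDerivAt C (((-Real.sin u : ℝ) : ℂ) • Y - ((Real.cos u : ℝ) : ℂ) • Z) u :=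
      (hc.smul_const Y).sub (hs.smul_const Z)
    have hD := (hQ.mul hCd).mul hP
    convert hD using 1
    case e'_4 => rfl
    case e'_5 => rfl
    case e'_6 => rfl
    case e'_8 => rfl
    rw [← key u]
    have hcm : Commute A (exp (u • A)) := ((Commute.refl A).smul_right u).exp_right
    rw [show exp (u • A) * A = A * exp (u • A) from hcm.eq.symm]
    simp only [Pi.mul_apply]
    noncomm_ring
  have hconst := is_const_of_deriv_eq_zero (f := fun v : ℝ => exp (-(v • A)) * C v * exp (v • A))
    (fun u => (hg u).differentiableAt) (fun u => (hg u).deriv) s 0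
  have h0 : exp (-(s • A)) * C s * exp (s • A) = Y := by
    simpa [hC] using hconst
  calc exp (s • A) * Y * exp (-(s • A))
      = exp (s • A) * (exp (-(s • A)) * C s * exp (s • A)) * exp (-(s • A)) := by
        rw [h0]
    _ = (exp (s • A) * exp (-(s • A))) * C s * (exp (s • A) * exp (-(s • A))) := by
        noncomm_ring
    _ = C s := by rw [exp_mul_exp_neg]; simp



lemma conj_smul (r : ℝ) (X : Matrix (Fin N) (Fin N) ℂ) :
    (Complex.I * (r : ℂ)) • X = r • (Complex.I • X) := by
  rw [← algebraMap_smul ℂ r (Complex.I • X), Complex.coe_algebraMap, smul_smul]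
  ring_nf

end Su2Aux

open Su2Aux

/-- The map `θ ↦ exp(itB J_{n_θ})` is differentiable (entrywise in the matrix,
equivalently in any matrix norm since the space is finite dimensional), and its
derivative `V` satisfies `i • (V * exp(−itB J_{n_θ})) = 2 sin(Bt/2) • J_{n₁}`,
i.e. `𝓗_θ = i (∂_θ U†) U` for `U = exp(−itB J_{n_θ})`. -/
theorem su2_H_theta_closed_form
    (N : ℕ) (hN : 0 < N)
    (Jx Jy Jz : Matrix (Fin N) (Fin N) ℂ)
    (hxy : Jx * Jy - Jy * Jx = Complex.I • Jz)
    (hyz : Jy * Jz - Jz * Jy = Complex.I • Jx)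
    (hzx : Jz * Jx - Jx * Jz = Complex.I • Jy)
    (J : (Fin 3 → ℝ) → Matrix (Fin N) (Fin N) ℂ)
    (hJ : ∀ v : Fin 3 → ℝ, J v = (v 0 : ℂ) • Jx + (v 1 : ℂ) • Jy + (v 2 : ℂ) • Jz)
    (B θ t : ℝ) :
    ∃ V : Matrix (Fin N) (Fin N) ℂ,
      (∀ i j : Fin N,
        HasDerivAt
          (fun θ' : ℝ =>
            NormedSpace.exp
              ((Complex.I * (t : ℂ) * (B : ℂ)) • J ![Real.cos θ', 0, Real.sin θ']) i j)
          (V i j) θ)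
      ∧ Complex.I •
          (V * NormedSpace.exp
              (-((Complex.I * (t : ℂ) * (B : ℂ)) • J ![Real.cos θ, 0, Real.sin θ])))
        = ((2 * Real.sin (B * t / 2) : ℝ) : ℂ) •
            J ![Real.cos (B * t / 2) * Real.sin θ, -Real.sin (B * t / 2),
                -(Real.cos (B * t / 2) * Real.cos θ)] := by
  have hJv : ∀ θ' : ℝ, J ![Real.cos θ', 0, Real.sin θ']
      = (Real.cos θ' : ℂ) • Jx + (Real.sin θ' : ℂ) • Jz := by
    intro θ'
    rw [hJ]
    norm_num
    simp [Matrix.cons_val_two]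
    rw [← Complex.ofReal_sin, Complex.coe_smul]
  -- conjugation identities
  have conjx : ∀ s : ℝ, exp (s • (Complex.I • Jy)) * Jx * exp (-(s • (Complex.I • Jy)))
      = (Real.cos s : ℂ) • Jx + (Real.sin s : ℂ) • Jz := by
    intro s
    have h1 : Jy * Jx - Jx * Jy = Complex.I • (-Jz) := by rw [smul_neg, ← hxy]; abel
    have h2 : Jy * (-Jz) - (-Jz) * Jy = -(Complex.I • Jx) := by rw [← hyz]; noncomm_ring
    have := conj_aux Jy Jx (-Jz) h1 h2 s
    rw [this]
    rw [smul_neg, sub_neg_eq_add]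
  have conjz : ∀ s : ℝ, exp (s • (Complex.I • Jy)) * Jz * exp (-(s • (Complex.I • Jy)))
      = (Real.cos s : ℂ) • Jz - (Real.sin s : ℂ) • Jx := by
    intro s
    exact conj_aux Jy Jz Jx hyz (by rw [← hxy]; noncomm_ring) s
  have conjy : ∀ s : ℝ, exp (s • (Complex.I • Jx)) * Jy * exp (-(s • (Complex.I • Jx)))
      = (Real.cos s : ℂ) • Jy - (Real.sin s : ℂ) • Jz := by
    intro s
    exact conj_aux Jx Jy Jz hxy (by rw [← hzx]; noncomm_ring) s
  -- the exponent as a conjugation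
  have hexp_arg : ∀ θ' : ℝ, (Complex.I * (t : ℂ) * (B : ℂ)) • J ![Real.cos θ', 0, Real.sin θ']
      = exp (θ' • (Complex.I • Jy)) * ((Complex.I * (t : ℂ) * (B : ℂ)) • Jx)
        * exp (-(θ' • (Complex.I • Jy))) := by
    intro θ'
    rw [hJv θ', mul_smul_comm, smul_mul_assoc, conjx θ']
  have hunit : ∀ θ' : ℝ, IsUnit (exp (θ' • (Complex.I • Jy))) :=
    fun θ' => Matrix.isUnit_exp _
  have hinv : ∀ θ' : ℝ, exp (-(θ' • (Complex.I • Jy)))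
      = (exp (θ' • (Complex.I • Jy)))⁻¹ := fun θ' => Matrix.exp_neg _
  have hfun : ∀ θ' : ℝ, exp ((Complex.I * (t : ℂ) * (B : ℂ)) • J ![Real.cos θ', 0, Real.sin θ'])
      = exp (θ' • (Complex.I • Jy)) * exp ((Complex.I * (t : ℂ) * (B : ℂ)) • Jx)
        * exp (-(θ' • (Complex.I • Jy))) := by
    intro θ'
    rw [hexp_arg θ', hinv θ', Matrix.exp_conj _ _ (hunit θ'), ← hinv θ']
  have hPd : HasDerivAt (fun u : ℝ => exp (u • (Complex.I • Jy)))
      (exp (θ • (Complex.I • Jy)) * (Complex.I • Jy)) θ := hasDerivAt_expP _ θ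
  have hQd : HasDerivAt (fun u : ℝ => exp (-(u • (Complex.I • Jy))))
      (-(exp (-(θ • (Complex.I • Jy))) * (Complex.I • Jy))) θ := by
    have h := hasDerivAt_expP (-(Complex.I • Jy)) θ
    simp only [smul_neg, mul_neg] at h
    exact h
  have hUd := (hPd.mul_const (exp ((Complex.I * (t : ℂ) * (B : ℂ)) • Jx))).mul hQd
  refine ⟨exp (θ • (Complex.I • Jy)) * (Complex.I • Jy)
      * exp ((Complex.I * (t : ℂ) * (B : ℂ)) • Jx) * exp (-(θ • (Complex.I • Jy)))
    + exp (θ • (Complex.I • Jy)) * exp ((Complex.I * (t : ℂ) * (B : ℂ)) • Jx)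
      * (-(exp (-(θ • (Complex.I • Jy))) * (Complex.I • Jy))), fun i j => ?_, ?_⟩
  · -- entrywise derivative
    have hV : HasDerivAt (fun θ' : ℝ =>
        exp ((Complex.I * (t : ℂ) * (B : ℂ)) • J ![Real.cos θ', 0, Real.sin θ']))
        (exp (θ • (Complex.I • Jy)) * (Complex.I • Jy)
          * exp ((Complex.I * (t : ℂ) * (B : ℂ)) • Jx) * exp (-(θ • (Complex.I • Jy)))
        + exp (θ • (Complex.I • Jy)) * exp ((Complex.I * (t : ℂ) * (B : ℂ)) • Jx)
          * (-(exp (-(θ • (Complex.I • Jy))) * (Complex.I • Jy)))) θ := by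
      simp only [hfun]
      exact hUd
    let L : Matrix (Fin N) (Fin N) ℂ →ₗ[ℝ] ℂ :=
      { toFun := fun M => M i j, map_add' := fun _ _ => rfl, map_smul' := fun _ _ => rfl }
    exact (LinearMap.toContinuousLinearMap L).hasFDerivAt.comp_hasDerivAt θ hV
  · -- closed form
    have hMM' : exp ((Complex.I * (t : ℂ) * (B : ℂ)) • Jx)
        * exp (-((Complex.I * (t : ℂ) * (B : ℂ)) • Jx)) = 1 := exp_mul_exp_neg _
    have hPQ : exp (θ • (Complex.I • Jy)) * exp (-(θ • (Complex.I • Jy))) = 1 :=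
      exp_mul_exp_neg _
    have hQP : exp (-(θ • (Complex.I • Jy))) * exp (θ • (Complex.I • Jy)) = 1 :=
      exp_neg_mul_exp _
    have hW : exp (-((Complex.I * (t : ℂ) * (B : ℂ)) • J ![Real.cos θ, 0, Real.sin θ]))
        = exp (θ • (Complex.I • Jy)) * exp (-((Complex.I * (t : ℂ) * (B : ℂ)) • Jx))
          * exp (-(θ • (Complex.I • Jy))) := by
      have harg : -((Complex.I * (t : ℂ) * (B : ℂ)) • J ![Real.cos θ, 0, Real.sin θ])
          = exp (θ • (Complex.I • Jy)) * (-((Complex.I * (t : ℂ) * (B : ℂ)) • Jx))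
            * exp (-(θ • (Complex.I • Jy))) := by
        rw [hexp_arg θ]; simp [mul_neg, neg_mul]
      rw [harg, hinv θ, Matrix.exp_conj _ _ (hunit θ), ← hinv θ]
    set Pθ := exp (θ • (Complex.I • Jy)) with hPθdef
    set Qθ := exp (-(θ • (Complex.I • Jy))) with hQθdef
    set M := exp ((Complex.I * (t : ℂ) * (B : ℂ)) • Jx) with hMdef
    set M' := exp (-((Complex.I * (t : ℂ) * (B : ℂ)) • Jx)) with hM'def
    have hcomJyP : Jy * Pθ = Pθ * Jy := by
      rw [hPθdef]
      exact ((((Commute.refl Jy).smul_right Complex.I).smul_right θ).exp_right).eq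
    have hcomJyQ : Jy * Qθ = Qθ * Jy := by
      rw [hQθdef]
      exact (((((Commute.refl Jy).smul_right Complex.I).smul_right θ).neg_right).exp_right).eq
    have hcomA0P : (Complex.I • Jy) * Pθ = Pθ * (Complex.I • Jy) := by
      rw [hPθdef]
      exact (((Commute.refl (Complex.I • Jy)).smul_right θ).exp_right).eq
    have hargx : (Complex.I * (t : ℂ) * (B : ℂ)) • Jx = (t * B : ℝ) • (Complex.I • Jx) := by
      rw [← conj_smul]
      congr 1
      push_cast
      ring
    have hMJyM' : M * Jy * M' = (Real.cos (t * B) : ℂ) • Jy - (Real.sin (t * B) : ℂ) • Jz := by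
      rw [hMdef, hM'def, hargx]
      exact conjy (t * B)
    have t1 : Pθ * (Complex.I • Jy) * M * Qθ * (Pθ * M' * Qθ) = Complex.I • Jy := by
      have e : Pθ * (Complex.I • Jy) * M * Qθ * (Pθ * M' * Qθ)
          = (Pθ * (Complex.I • Jy)) * (M * ((Qθ * Pθ) * M')) * Qθ := by noncomm_ring
      rw [e, hQP, one_mul, hMM', mul_one, ← hcomA0P, mul_assoc, hPQ, mul_one]
    have t2 : Pθ * M * (-(Qθ * (Complex.I • Jy))) * (Pθ * M' * Qθ)
        = -(Complex.I • (Pθ * (M * Jy * M') * Qθ)) := by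
      have hq : Qθ * (Complex.I • Jy) = Complex.I • (Jy * Qθ) := by
        rw [mul_smul_comm, ← hcomJyQ]
      have e : Pθ * M * (Jy * Qθ) * (Pθ * M' * Qθ) = Pθ * (M * Jy * M') * Qθ := by
        have e' : Pθ * M * (Jy * Qθ) * (Pθ * M' * Qθ)
            = (Pθ * (M * Jy)) * ((Qθ * Pθ) * (M' * Qθ)) := by noncomm_ring
        rw [e', hQP, one_mul]
        noncomm_ring
      rw [hq, mul_neg, neg_mul, mul_smul_comm, smul_mul_assoc, e]
    have hdist : Pθ * ((Real.cos (t * B) : ℂ) • Jy - (Real.sin (t * B) : ℂ) • Jz) * Qθ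
        = (Real.cos (t * B) : ℂ) • (Pθ * Jy * Qθ) - (Real.sin (t * B) : ℂ) • (Pθ * Jz * Qθ) := by
      simp [mul_sub, sub_mul, mul_smul_comm, smul_mul_assoc]
    have hPJyQ : Pθ * Jy * Qθ = Jy := by
      rw [← hcomJyP, mul_assoc, hPQ, mul_one]
    have hPJzQ : Pθ * Jz * Qθ = (Real.cos θ : ℂ) • Jz - (Real.sin θ : ℂ) • Jx := by
      rw [hPθdef, hQθdef]; exact conjz θ
    rw [hW, add_mul, t1, t2, hMJyM', hdist, hPJyQ, hPJzQ, hJ]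
    have hsin2 : Real.sin (t * B) = 2 * Real.sin (B * t / 2) * Real.cos (B * t / 2) := by
      rw [show t * B = 2 * (B * t / 2) by ring, Real.sin_two_mul]
    have hcos2 : Real.cos (t * B) = 1 - 2 * Real.sin (B * t / 2) ^ 2 := by
      rw [show t * B = 2 * (B * t / 2) by ring, Real.cos_two_mul]
      nlinarith [Real.sin_sq_add_cos_sq (B * t / 2)]
    rw [hsin2, hcos2]
    norm_num
    match_scalars <;> (ring_nf; simp [Complex.I_sq]; try ring_nf)
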